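/- Let c, s, τ be positive integers with 1 ≤ τ ≤ s, set d = c·s and s₁ = max(1, s−1). Let a ∈ ℝ^d be a nonzero vector, let ω = #{(l,i) : a_{(l,i)} ≠ 0} and ω' = #{l : a_{(l,i)} ≠ 0 for some i}, and define α* = 1 + (τ−1)(ω−1)/s₁ + (τ/s − (τ−1)/s₁)·((ω'−1)/ω')·ω. Then for every h ∈ ℝ^d, the average over all distributed samplings of (∑_{j ∈ Ŝ} a_j h_j)² is at most (τ/s)·α*·∑_{j=1}^d a_j² h_j². -/

import Mathlib

open Finset

/-- The finite set of all distributed samplings: tuples `S = (S_1,…,S_c)` where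
each `S_l` is a `τ`-element subset of the block `{1,…,s}`. -/
def samplings (c s τ : ℕ) : Finset (Fin c → Finset (Fin s)) :=
  Finset.univ.filter fun S => ∀ l, (S l).card = τ


lemma card_filter_powersetCard_aux {α : Type*} [DecidableEq α] (U : Finset α) (k : ℕ) (i : α)
    (hi : i ∈ U) (Q : Finset α → Prop) [DecidablePred Q]
    (hQ : ∀ T, i ∉ T → (Q (insert i T) ↔ Q T)) :
    ((powersetCard (k+1) U).filter (fun T => i ∈ T ∧ Q T)).card
      = ((powersetCard k (U.erase i)).filter Q).card := by
  apply card_nbij' (fun T => T.erase i) (fun T => insert i T)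
  · intro T hT
    simp only [mem_coe, mem_filter, mem_powersetCard] at hT ⊢
    obtain ⟨⟨hsub, hcard⟩, hiT, hQT⟩ := hT
    refine ⟨⟨erase_subset_erase i hsub, by rw [card_erase_of_mem hiT, hcard]; rfl⟩, ?_⟩
    have := hQ (T.erase i) (notMem_erase i T)
    rw [insert_erase hiT] at this
    exact this.mp hQT
  · intro T hT
    simp only [mem_coe, mem_filter, mem_powersetCard] at hT ⊢
    obtain ⟨⟨hsub, hcard⟩, hQT⟩ := hT
    have hiT : i ∉ T := fun hx => (notMem_erase i U) (hsub hx)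
    refine ⟨⟨insert_subset hi (hsub.trans (erase_subset i U)), ?_⟩, mem_insert_self i T,
      (hQ T hiT).mpr hQT⟩
    rw [card_insert_of_notMem hiT, hcard]
  · intro T hT
    simp only [mem_coe, mem_filter] at hT
    exact insert_erase hT.2.1
  · intro T hT
    simp only [mem_coe, mem_filter, mem_powersetCard] at hT
    have hiT : i ∉ T := fun hx => (notMem_erase i U) (hT.1.1 hx)
    exact erase_insert hiT

lemma card_filter_mem_powersetCard {α : Type*} [DecidableEq α] (U : Finset α) (k : ℕ) (i : α)
    (hi : i ∈ U) :
    ((powersetCard (k+1) U).filter (fun T => i ∈ T)).card = (U.card - 1).choose k := by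
  have := card_filter_powersetCard_aux U k i hi (fun _ => True) (fun _ _ => Iff.rfl)
  simp only [and_true, filter_true_of_mem (fun _ _ => trivial)] at this
  rw [this, card_powersetCard, card_erase_of_mem hi]

lemma card_filter_pair_powersetCard {α : Type*} [DecidableEq α] (U : Finset α) (k : ℕ) (i j : α)
    (hi : i ∈ U) (hj : j ∈ U) (hij : i ≠ j) :
    ((powersetCard (k+2) U).filter (fun T => i ∈ T ∧ j ∈ T)).card = (U.card - 2).choose k := by
  have := card_filter_powersetCard_aux U (k+1) i hi (fun T => j ∈ T)
    (fun T hT => by simp [mem_insert, hij.symm])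
  rw [this, card_filter_mem_powersetCard _ k j (mem_erase.2 ⟨hij.symm, hj⟩),
    card_erase_of_mem hi]
  rw [Nat.sub_sub]

lemma choose_ratio_one (s τ : ℕ) (hs : 0 < s) (hτ : 0 < τ) :
    (((s-1).choose (τ-1) : ℝ)) = (s.choose τ : ℝ) * ((τ:ℝ) / (s:ℝ)) := by
  have hnat : s * (s-1).choose (τ-1) = s.choose τ * τ := by
    have := Nat.add_one_mul_choose_eq (s-1) (τ-1)
    have e1 : s - 1 + 1 = s := by omega
    have e2 : τ - 1 + 1 = τ := by omega
    rwa [e1, e2] at this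
  have hR : (s:ℝ) * ((s-1).choose (τ-1) : ℝ) = (s.choose τ : ℝ) * (τ:ℝ) := by
    exact_mod_cast congrArg (Nat.cast : ℕ → ℝ) hnat
  have hs' : (s:ℝ) ≠ 0 := Nat.cast_ne_zero.2 hs.ne'
  field_simp
  linarith

lemma choose_ratio_two (s τ : ℕ) (hs : 2 ≤ s) (hτ : 2 ≤ τ) :
    (((s-2).choose (τ-2) : ℝ))
      = (s.choose τ : ℝ) * ((τ:ℝ) / (s:ℝ)) * (((τ:ℝ)-1) / ((s:ℝ)-1)) := by
  have h1 : (((s-1)-1).choose ((τ-1)-1) : ℝ)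
      = ((s-1).choose (τ-1) : ℝ) * (((s-1):ℕ):ℝ)⁻¹ * (((τ-1):ℕ):ℝ) := by
    have := choose_ratio_one (s-1) (τ-1) (by omega) (by omega)
    rw [this]; ring
  rw [Nat.sub_sub, Nat.sub_sub] at h1
  norm_num at h1
  rw [h1, choose_ratio_one s τ (by omega) (by omega)]
  have c1 : (((s-1):ℕ):ℝ) = (s:ℝ) - 1 := by
    push_cast [Nat.cast_sub (by omega : 1 ≤ s)]; ring
  have c2 : (((τ-1):ℕ):ℝ) = (τ:ℝ) - 1 := by
    push_cast [Nat.cast_sub (by omega : 1 ≤ τ)]; ring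
  rw [c1, c2]; ring

lemma expand_sum (c s τ : ℕ) (X : Fin c × Fin s → ℝ) :
    ∑ S ∈ samplings c s τ, (∑ l : Fin c, ∑ i ∈ S l, X (l, i)) ^ 2
    = ∑ p : Fin c × Fin s, ∑ q : Fin c × Fin s, X p * X q *
        ∏ l : Fin c, (((powersetCard τ (univ : Finset (Fin s))).filter
          (fun T => (p.1 = l → p.2 ∈ T) ∧ (q.1 = l → q.2 ∈ T))).card : ℝ) := by
  classical
  have hsamp : samplings c s τ
      = Fintype.piFinset (fun _ : Fin c => powersetCard τ (univ : Finset (Fin s))) := by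
    ext S; simp [samplings, Fintype.mem_piFinset]
  rw [hsamp]
  have step1 : ∀ S : Fin c → Finset (Fin s),
      (∑ l : Fin c, ∑ i ∈ S l, X (l, i)) ^ 2
      = ∑ p : Fin c × Fin s, ∑ q : Fin c × Fin s,
          (if p.2 ∈ S p.1 then X p else 0) * (if q.2 ∈ S q.1 then X q else 0) := by
    intro S
    have e1 : (∑ l : Fin c, ∑ i ∈ S l, X (l, i))
        = ∑ p : Fin c × Fin s, (if p.2 ∈ S p.1 then X p else 0) := by
      rw [Fintype.sum_prod_type]
      refine Finset.sum_congr rfl fun l _ => ?_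
      simp [Finset.sum_ite_mem]
    rw [e1, sq, Finset.sum_mul_sum]
  simp_rw [step1]
  rw [Finset.sum_comm]
  refine Finset.sum_congr rfl fun p _ => ?_
  rw [Finset.sum_comm]
  refine Finset.sum_congr rfl fun q _ => ?_
  have step2 : ∀ S ∈ Fintype.piFinset (fun _ : Fin c => powersetCard τ (univ : Finset (Fin s))),
      (if p.2 ∈ S p.1 then X p else 0) * (if q.2 ∈ S q.1 then X q else 0)
      = X p * X q * ∏ l : Fin c,
          (if (p.1 = l → p.2 ∈ S l) ∧ (q.1 = l → q.2 ∈ S l) then (1:ℝ) else 0) := by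
    intro S _
    by_cases hp : p.2 ∈ S p.1
    · by_cases hq : q.2 ∈ S q.1
      · rw [if_pos hp, if_pos hq, Finset.prod_eq_one, mul_one]
        intro l _
        rw [if_pos ⟨fun e => e ▸ hp, fun e => e ▸ hq⟩]
      · rw [if_neg hq, mul_zero, Finset.prod_eq_zero (mem_univ q.1), mul_zero]
        rw [if_neg]; rintro ⟨-, hq'⟩; exact hq (hq' rfl)
    · rw [if_neg hp, zero_mul, Finset.prod_eq_zero (mem_univ p.1), mul_zero]
      rw [if_neg]; rintro ⟨hp', -⟩; exact hp (hp' rfl)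
  rw [Finset.sum_congr rfl step2, ← Finset.mul_sum,
    ← Finset.prod_univ_sum (fun _ : Fin c => powersetCard τ (univ : Finset (Fin s)))
      (fun l T => if (p.1 = l → p.2 ∈ T) ∧ (q.1 = l → q.2 ∈ T) then (1:ℝ) else 0)]
  congr 1
  refine Finset.prod_congr rfl fun l _ => ?_
  rw [Finset.sum_boole]

lemma single_count (s τ : ℕ) (hs : 0 < s) (hτ : 0 < τ) (i : Fin s) :
    (((powersetCard τ (univ : Finset (Fin s))).filter (fun T => i ∈ T)).card : ℝ)
      = (s.choose τ : ℝ) * ((τ:ℝ)/(s:ℝ)) := by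
  obtain ⟨k, rfl⟩ : ∃ k, τ = k + 1 := ⟨τ-1, by omega⟩
  rw [card_filter_mem_powersetCard _ k i (mem_univ i), card_univ, Fintype.card_fin]
  have := choose_ratio_one s (k+1) hs hτ
  simpa using this

lemma pair_count (s τ : ℕ) (hτ : 0 < τ) (i j : Fin s) (hij : i ≠ j) :
    (((powersetCard τ (univ : Finset (Fin s))).filter (fun T => i ∈ T ∧ j ∈ T)).card : ℝ)
      = (s.choose τ : ℝ) * ((τ:ℝ)/(s:ℝ)) * (((τ:ℝ)-1)/((s:ℝ)-1)) := by
  have hs2 : 2 ≤ s := by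
    have h1 := i.isLt; have h2 := j.isLt
    have : i.val ≠ j.val := fun e => hij (Fin.ext e)
    omega
  rcases Nat.lt_or_ge τ 2 with hτ1 | hτ2
  · have hτe : τ = 1 := by omega
    subst hτe
    have hemp : ((powersetCard 1 (univ : Finset (Fin s))).filter
        (fun T => i ∈ T ∧ j ∈ T)) = ∅ := by
      rw [filter_eq_empty_iff]
      intro T hT
      rw [mem_powersetCard] at hT
      rintro ⟨hiT, hjT⟩
      have hsub : ({i, j} : Finset (Fin s)) ⊆ T :=
        insert_subset hiT (singleton_subset_iff.2 hjT)
      have := card_le_card hsub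
      rw [hT.2, card_insert_of_notMem (by simp [hij]), card_singleton] at this
      omega
    rw [hemp]
    simp
  · obtain ⟨k, rfl⟩ : ∃ k, τ = k + 2 := ⟨τ-2, by omega⟩
    rw [card_filter_pair_powersetCard _ k i j (mem_univ i) (mem_univ j) hij,
      card_univ, Fintype.card_fin]
    have := choose_ratio_two s (k+2) hs2 (by omega)
    simpa using this

lemma weight_eq (c s τ : ℕ) (hs : 0 < s) (hτ : 1 ≤ τ) (hτs : τ ≤ s)
    (p q : Fin c × Fin s) :
    (∏ l : Fin c, (((powersetCard τ (univ : Finset (Fin s))).filter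
        (fun T => (p.1 = l → p.2 ∈ T) ∧ (q.1 = l → q.2 ∈ T))).card : ℝ))
      / ((s.choose τ : ℝ) ^ c)
    = (if p = q then (τ:ℝ)/(s:ℝ)
        else if p.1 = q.1 then ((τ:ℝ)/(s:ℝ)) * (((τ:ℝ)-1)/((max 1 (s-1) : ℕ):ℝ))
        else ((τ:ℝ)/(s:ℝ))^2) := by
  classical
  have hM : (0:ℝ) < (s.choose τ : ℝ) := by exact_mod_cast Nat.choose_pos hτs
  have hMne : (s.choose τ : ℝ) ≠ 0 := hM.ne'
  have hpow : ((s.choose τ : ℝ))^c = ∏ _l : Fin c, (s.choose τ : ℝ) := by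
    rw [prod_const, card_univ, Fintype.card_fin]
  rw [hpow, ← Finset.prod_div_distrib]
  have htriv : ∀ l : Fin c, l ≠ p.1 → l ≠ q.1 →
      ((((powersetCard τ (univ : Finset (Fin s))).filter
        (fun T => (p.1 = l → p.2 ∈ T) ∧ (q.1 = l → q.2 ∈ T))).card : ℝ)) / (s.choose τ : ℝ) = 1 := by
    intro l hlp hlq
    have : ((powersetCard τ (univ : Finset (Fin s))).filter
        (fun T => (p.1 = l → p.2 ∈ T) ∧ (q.1 = l → q.2 ∈ T)))
        = powersetCard τ (univ : Finset (Fin s)) := by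
      apply filter_true_of_mem
      intro T _
      exact ⟨fun e => absurd e.symm hlp, fun e => absurd e.symm hlq⟩
    rw [this, card_powersetCard, card_univ, Fintype.card_fin]
    exact div_self hMne
  by_cases hpq : p = q
  · subst hpq
    rw [if_pos rfl]
    rw [Finset.prod_eq_single p.1 (fun l _ hl => htriv l hl hl)
      (fun hl => absurd (mem_univ p.1) hl)]
    have : ((powersetCard τ (univ : Finset (Fin s))).filter
        (fun T => (p.1 = p.1 → p.2 ∈ T) ∧ (p.1 = p.1 → p.2 ∈ T)))
        = (powersetCard τ (univ : Finset (Fin s))).filter (fun T => p.2 ∈ T) := by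
      apply filter_congr; intro T _; simp
    rw [this, single_count s τ hs hτ p.2]
    field_simp
  · rw [if_neg hpq]
    by_cases hblock : p.1 = q.1
    · rw [if_pos hblock]
      have hij : p.2 ≠ q.2 := fun e => hpq (Prod.ext hblock e)
      have hs2 : 2 ≤ s := by
        have h1 := p.2.isLt; have h2 := q.2.isLt
        have : p.2.val ≠ q.2.val := fun e => hij (Fin.ext e)
        omega
      rw [Finset.prod_eq_single p.1
        (fun l _ hl => htriv l hl (fun e => hl (e.trans hblock.symm)))
        (fun hl => absurd (mem_univ p.1) hl)]
      have : ((powersetCard τ (univ : Finset (Fin s))).filter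
          (fun T => (p.1 = p.1 → p.2 ∈ T) ∧ (q.1 = p.1 → q.2 ∈ T)))
          = (powersetCard τ (univ : Finset (Fin s))).filter (fun T => p.2 ∈ T ∧ q.2 ∈ T) := by
        apply filter_congr; intro T _; simp [hblock.symm]
      rw [this, pair_count s τ hτ p.2 q.2 hij]
      have hcast : ((max 1 (s-1) : ℕ):ℝ) = (s:ℝ) - 1 := by
        rw [Nat.max_eq_right (by omega : 1 ≤ s - 1)]
        push_cast [Nat.cast_sub (by omega : 1 ≤ s)]; ring
      rw [hcast]
      have hs0 : (s:ℝ) ≠ 0 := Nat.cast_ne_zero.2 hs.ne'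
      have hs1 : (s:ℝ) - 1 ≠ 0 := by
        have : (2:ℝ) ≤ (s:ℝ) := by exact_mod_cast hs2
        linarith
      field_simp
    · rw [if_neg hblock]
      have hout : ∀ l ∈ (univ : Finset (Fin c)), l ∉ ({p.1, q.1} : Finset (Fin c)) →
          ((((powersetCard τ (univ : Finset (Fin s))).filter
            (fun T => (p.1 = l → p.2 ∈ T) ∧ (q.1 = l → q.2 ∈ T))).card : ℝ)) / (s.choose τ : ℝ)
            = 1 := by
        intro l _ hl
        simp only [mem_insert, mem_singleton, not_or] at hl
        exact htriv l hl.1 hl.2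
      rw [← Finset.prod_subset (subset_univ ({p.1, q.1} : Finset (Fin c))) hout,
        prod_pair hblock]
      have e1 : ((powersetCard τ (univ : Finset (Fin s))).filter
          (fun T => (p.1 = p.1 → p.2 ∈ T) ∧ (q.1 = p.1 → q.2 ∈ T)))
          = (powersetCard τ (univ : Finset (Fin s))).filter (fun T => p.2 ∈ T) := by
        apply filter_congr; intro T _
        have hq : q.1 ≠ p.1 := fun e => hblock e.symm
        simp [hq]
      have e2 : ((powersetCard τ (univ : Finset (Fin s))).filter
          (fun T => (p.1 = q.1 → p.2 ∈ T) ∧ (q.1 = q.1 → q.2 ∈ T)))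
          = (powersetCard τ (univ : Finset (Fin s))).filter (fun T => q.2 ∈ T) := by
        apply filter_congr; intro T _
        simp [hblock]
      rw [e1, e2, single_count s τ hs hτ p.2, single_count s τ hs hτ q.2]
      field_simp

noncomputable def RR (s τ : ℕ) : ℝ := (τ:ℝ)/(s:ℝ)
noncomputable def BB (s τ : ℕ) : ℝ := ((τ:ℝ)-1)/((max 1 (s-1) : ℕ):ℝ)

lemma weight_eq' (c s τ : ℕ) (hs : 0 < s) (hτ : 1 ≤ τ) (hτs : τ ≤ s)
    (p q : Fin c × Fin s) :
    (∏ l : Fin c, (((powersetCard τ (univ : Finset (Fin s))).filter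
        (fun T => (p.1 = l → p.2 ∈ T) ∧ (q.1 = l → q.2 ∈ T))).card : ℝ))
      / ((s.choose τ : ℝ) ^ c)
    = (if p = q then RR s τ
        else if p.1 = q.1 then RR s τ * BB s τ
        else (RR s τ)^2) := by
  rw [weight_eq c s τ hs hτ hτs p q]; rfl

lemma sum_all {n : Type*} [Fintype n] (X : n → ℝ) (k : ℝ) :
    ∑ p : n, ∑ q : n, X p * (X q * k) = k * (∑ p : n, X p)^2 := by
  calc ∑ p : n, ∑ q : n, X p * (X q * k)
      = ∑ p : n, X p * ((∑ q : n, X q) * k) := by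
        refine Finset.sum_congr rfl fun p _ => ?_
        rw [← Finset.mul_sum, ← Finset.sum_mul]
    _ = (∑ p : n, X p) * ((∑ q : n, X q) * k) := by rw [← Finset.sum_mul]
    _ = k * (∑ p : n, X p)^2 := by ring

lemma sum_diag {n : Type*} [Fintype n] [DecidableEq n] (X : n → ℝ) (k : ℝ) :
    ∑ p : n, ∑ q : n, X p * (X q * (if p = q then k else 0)) = k * ∑ p : n, (X p)^2 := by
  rw [Finset.mul_sum]
  refine Finset.sum_congr rfl fun p _ => ?_
  rw [Finset.sum_eq_single p (fun q _ hq => by rw [if_neg (fun e => hq e.symm), mul_zero, mul_zero])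
    (fun hp => absurd (mem_univ p) hp), if_pos rfl]
  ring

lemma sum_block (c s : ℕ) (X : Fin c × Fin s → ℝ) (k : ℝ) :
    ∑ p : Fin c × Fin s, ∑ q : Fin c × Fin s, X p * (X q * (if p.1 = q.1 then k else 0))
      = k * ∑ l : Fin c, (∑ i : Fin s, X (l, i))^2 := by
  have inner : ∀ p : Fin c × Fin s,
      ∑ q : Fin c × Fin s, X p * (X q * (if p.1 = q.1 then k else 0))
        = X p * ((∑ i : Fin s, X (p.1, i)) * k) := by
    intro p
    rw [Fintype.sum_prod_type]
    rw [Finset.sum_eq_single p.1 (fun l' _ hl' => by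
        have hne : ¬ p.1 = l' := fun e => hl' e.symm
        simp [hne]) (fun hl => absurd (mem_univ p.1) hl)]
    have e : ∀ i' : Fin s, X p * (X (p.1, i') * (if p.1 = (p.1, i').1 then k else 0))
        = X p * (X (p.1, i') * k) := fun i' => by simp
    rw [Finset.sum_congr rfl fun i' _ => e i', ← Finset.mul_sum, ← Finset.sum_mul]
  rw [Finset.sum_congr rfl fun p _ => inner p, Fintype.sum_prod_type, Finset.mul_sum]
  refine Finset.sum_congr rfl fun l _ => ?_
  have e : ∀ i : Fin s, X (l, i) * ((∑ i' : Fin s, X ((l, i).1, i')) * k)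
      = X (l, i) * ((∑ i' : Fin s, X (l, i')) * k) := fun i => by simp
  rw [Finset.sum_congr rfl fun i _ => e i, ← Finset.sum_mul, sq]
  ring

lemma expand_sum' (c s τ : ℕ) (a h : Fin c × Fin s → ℝ) :
    ∑ S ∈ samplings c s τ, (∑ l : Fin c, ∑ i ∈ S l, a (l, i) * h (l, i)) ^ 2
    = ∑ p : Fin c × Fin s, ∑ q : Fin c × Fin s, (a p * h p) * (a q * h q) *
        ∏ l : Fin c, (((powersetCard τ (univ : Finset (Fin s))).filter
          (fun T => (p.1 = l → p.2 ∈ T) ∧ (q.1 = l → q.2 ∈ T))).card : ℝ) :=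
  expand_sum c s τ (fun p => a p * h p)

lemma key_identity (c s τ : ℕ) (hs : 0 < s) (hτ : 1 ≤ τ) (hτs : τ ≤ s)
    (a h : Fin c × Fin s → ℝ) :
    (∑ S ∈ samplings c s τ, (∑ l : Fin c, ∑ i ∈ S l, a (l, i) * h (l, i)) ^ 2)
        / ((s.choose τ : ℝ) ^ c)
    = (RR s τ)^2 * (∑ p : Fin c × Fin s, a p * h p)^2
      + (RR s τ * BB s τ - (RR s τ)^2) * (∑ l : Fin c, (∑ i : Fin s, a (l, i) * h (l, i))^2)
      + (RR s τ - RR s τ * BB s τ) * (∑ p : Fin c × Fin s, (a p * h p)^2) := by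
  rw [expand_sum' c s τ a h, Finset.sum_div]
  simp only [Finset.sum_div, mul_div_assoc]
  simp only [weight_eq' c s τ hs hτ hτs]
  have e2 : ∀ p q : Fin c × Fin s,
      (a p * h p) * (a q * h q) * (if p = q then RR s τ
          else if p.1 = q.1 then RR s τ * BB s τ else (RR s τ)^2)
      = (a p * h p) * ((a q * h q) * ((RR s τ)^2))
        + (a p * h p) * ((a q * h q) * (if p.1 = q.1 then RR s τ * BB s τ - (RR s τ)^2 else 0))
        + (a p * h p) * ((a q * h q) * (if p = q then RR s τ - RR s τ * BB s τ else 0)) := by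
    intro p q
    by_cases h1 : p = q
    · subst h1; rw [if_pos rfl, if_pos rfl, if_pos rfl]; ring
    · by_cases h2 : p.1 = q.1
      · rw [if_neg h1, if_pos h2, if_pos h2, if_neg h1]; ring
      · rw [if_neg h1, if_neg h2, if_neg h2, if_neg h1]; ring
  simp only [e2, Finset.sum_add_distrib]
  rw [sum_all (fun p : Fin c × Fin s => a p * h p),
    sum_block c s (fun p => a p * h p), sum_diag (fun p : Fin c × Fin s => a p * h p)]

/-- inequality (10) of the paper, for a single row `a`.
Coordinates are indexed by `(l,i) ∈ Fin c × Fin s`, `d = c·s`, `s₁ = max(1,s−1)`.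
For nonzero `a`, with `ω` its number of nonzeros, `ω'` its number of active
blocks, and `α* = 1 + (τ−1)(ω−1)/s₁ + (τ/s − (τ−1)/s₁)·((ω'−1)/ω')·ω`, for every
`h`, the average over all distributed samplings of `(∑_{j∈Ŝ} a_j h_j)²` is at
most `(τ/s)·α*·∑_j a_j² h_j²`. -/
theorem stmt_4 (c s τ : ℕ) (hc : 0 < c) (hs : 0 < s) (hτ : 1 ≤ τ) (hτs : τ ≤ s)
    (a : Fin c × Fin s → ℝ) (ha : a ≠ 0)
    (ω ω' : ℕ)
    (hω : ω = (Finset.univ.filter fun p : Fin c × Fin s => a p ≠ 0).card)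
    (hω' : ω' = (Finset.univ.filter fun l : Fin c => ∃ i : Fin s, a (l, i) ≠ 0).card)
    (h : Fin c × Fin s → ℝ) :
    (∑ S ∈ samplings c s τ,
        (∑ l : Fin c, ∑ i ∈ S l, a (l, i) * h (l, i)) ^ 2) / ((s.choose τ : ℝ) ^ c) ≤
      ((τ : ℝ) / (s : ℝ)) *
        (1 + ((τ : ℝ) - 1) * ((ω : ℝ) - 1) / ((max 1 (s - 1) : ℕ) : ℝ)
          + ((τ : ℝ) / (s : ℝ) - ((τ : ℝ) - 1) / ((max 1 (s - 1) : ℕ) : ℝ)) *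
              (((ω' : ℝ) - 1) / (ω' : ℝ)) * (ω : ℝ)) *
        ∑ p : Fin c × Fin s, (a p) ^ 2 * (h p) ^ 2 := by
  classical
  rw [key_identity c s τ hs hτ hτs a h]
  have hτR : (1:ℝ) ≤ (τ:ℝ) := by exact_mod_cast hτ
  have hsR : (1:ℝ) ≤ (s:ℝ) := by exact_mod_cast hs
  have hτsR : (τ:ℝ) ≤ (s:ℝ) := by exact_mod_cast hτs
  have hr1 : 0 ≤ RR s τ := by unfold RR; positivity
  have hβ0 : 0 ≤ BB s τ := by
    unfold BB; apply div_nonneg (by linarith) (by positivity)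
  have hβr1 : BB s τ ≤ RR s τ := by
    unfold RR BB
    rcases Nat.lt_or_ge s 2 with h2 | h2
    · have hs1 : s = 1 := by omega
      have hτ1 : τ = 1 := by omega
      subst hs1; subst hτ1; norm_num
    · have hmax : max 1 (s-1) = s - 1 := by omega
      rw [hmax]
      have c1 : ((s-1:ℕ):ℝ) = (s:ℝ)-1 := by
        push_cast [Nat.cast_sub (by omega : 1 ≤ s)]; ring
      have h2R : (2:ℝ) ≤ (s:ℝ) := by exact_mod_cast h2
      rw [c1, div_le_div_iff₀ (by linarith) (by linarith)]
      nlinarith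
  obtain ⟨p0, hp0'⟩ := Function.ne_iff.1 ha
  have hp0 : a p0 ≠ 0 := by simpa using hp0'
  have hω1 : (1:ℝ) ≤ (ω:ℝ) := by
    have : 0 < ω := by
      rw [hω, Finset.card_pos, Finset.filter_nonempty_iff]
      exact ⟨p0, mem_univ p0, hp0⟩
    exact_mod_cast this
  have hω'1 : (1:ℝ) ≤ (ω':ℝ) := by
    have : 0 < ω' := by
      rw [hω', Finset.card_pos, Finset.filter_nonempty_iff]
      exact ⟨p0.1, mem_univ p0.1, ⟨p0.2, by simpa using hp0⟩⟩
    exact_mod_cast this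
  have hω'pos : (0:ℝ) < (ω':ℝ) := lt_of_lt_of_le one_pos hω'1
  set u : ℝ := ∑ p : Fin c × Fin s, (a p * h p)^2 with hudef
  set v : ℝ := ∑ l : Fin c, (∑ i : Fin s, a (l, i) * h (l, i))^2 with hvdef
  set w : ℝ := (∑ p : Fin c × Fin s, a p * h p)^2 with hwdef
  have hu0 : 0 ≤ u := Finset.sum_nonneg fun p _ => sq_nonneg _
  have hsum2 : (∑ p : Fin c × Fin s, (a p)^2 * (h p)^2) = u := by
    rw [hudef]; exact Finset.sum_congr rfl fun p _ => by ring
  have hwu : w ≤ (ω:ℝ) * u := by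
    have hstep : (∑ p : Fin c × Fin s, a p * h p)
        = ∑ p ∈ Finset.univ.filter (fun p : Fin c × Fin s => a p ≠ 0), a p * h p := by
      symm
      apply Finset.sum_filter_of_ne
      intro p _ hne hap
      exact hne (by rw [hap, zero_mul])
    rw [hwdef, hudef, hstep, hω]
    refine le_trans sq_sum_le_card_mul_sum_sq ?_
    apply mul_le_mul_of_nonneg_left ?_ (Nat.cast_nonneg _)
    exact Finset.sum_le_sum_of_subset_of_nonneg (Finset.filter_subset _ _)
      (fun p _ _ => sq_nonneg _)
  have hwv : w ≤ (ω':ℝ) * v := by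
    have hprod : (∑ p : Fin c × Fin s, a p * h p)
        = ∑ l : Fin c, ∑ i : Fin s, a (l, i) * h (l, i) := by rw [Fintype.sum_prod_type]
    have hstep : (∑ l : Fin c, ∑ i : Fin s, a (l, i) * h (l, i))
        = ∑ l ∈ Finset.univ.filter (fun l : Fin c => ∃ i : Fin s, a (l, i) ≠ 0),
            ∑ i : Fin s, a (l, i) * h (l, i) := by
      symm
      apply Finset.sum_filter_of_ne
      intro l _ hne
      by_contra hall
      push_neg at hall
      exact hne (Finset.sum_eq_zero fun i _ => by rw [hall i, zero_mul])
    rw [hwdef, hvdef, hprod, hstep, hω']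
    refine le_trans sq_sum_le_card_mul_sum_sq ?_
    apply mul_le_mul_of_nonneg_left ?_ (Nat.cast_nonneg _)
    exact Finset.sum_le_sum_of_subset_of_nonneg (Finset.filter_subset _ _)
      (fun l _ _ => sq_nonneg _)
  have t1 : BB s τ * (w - u) ≤ BB s τ * (((ω:ℝ) - 1) * u) := by
    apply mul_le_mul_of_nonneg_left ?_ hβ0
    nlinarith [hwu]
  have hdivv : w / (ω':ℝ) ≤ v := by
    rw [div_le_iff₀ hω'pos]
    nlinarith [hwv]
  have t2' : w - v ≤ (((ω':ℝ) - 1)/(ω':ℝ)) * ((ω:ℝ) * u) := by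
    have hfrac : (((ω':ℝ) - 1)/(ω':ℝ)) * ((ω:ℝ) * u)
        = (ω:ℝ)*u - ((ω:ℝ)*u) * (1/(ω':ℝ)) := by
      field_simp
    have hmul : w * (1 - 1/(ω':ℝ)) ≤ ((ω:ℝ)*u) * (1 - 1/(ω':ℝ)) := by
      apply mul_le_mul_of_nonneg_right hwu
      rw [sub_nonneg, div_le_one hω'pos]
      exact hω'1
    have hwdiv : w * (1/(ω':ℝ)) = w / (ω':ℝ) := by ring
    rw [hfrac]
    nlinarith [hdivv, hmul, hwdiv]
  have t2 : (RR s τ - BB s τ) * (w - v)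
      ≤ (RR s τ - BB s τ) * ((((ω':ℝ) - 1)/(ω':ℝ)) * ((ω:ℝ) * u)) :=
    mul_le_mul_of_nonneg_left t2' (by linarith)
  have m1 := mul_le_mul_of_nonneg_left t1 hr1
  have m2 := mul_le_mul_of_nonneg_left t2 hr1
  have hgoalR : ((τ : ℝ) / (s : ℝ)) *
        (1 + ((τ : ℝ) - 1) * ((ω : ℝ) - 1) / ((max 1 (s - 1) : ℕ) : ℝ)
          + ((τ : ℝ) / (s : ℝ) - ((τ : ℝ) - 1) / ((max 1 (s - 1) : ℕ) : ℝ)) *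
              (((ω' : ℝ) - 1) / (ω' : ℝ)) * (ω : ℝ)) *
        (∑ p : Fin c × Fin s, (a p) ^ 2 * (h p) ^ 2)
      = RR s τ * u + RR s τ * (BB s τ * (((ω:ℝ)-1)*u))
        + RR s τ * ((RR s τ - BB s τ) * ((((ω':ℝ)-1)/(ω':ℝ)) * ((ω:ℝ)*u))) := by
    rw [hsum2]
    unfold RR BB
    ring
  rw [hgoalR]
  have e1 : (RR s τ)^2*w + (RR s τ*BB s τ - (RR s τ)^2)*v + (RR s τ - RR s τ*BB s τ)*u
      = RR s τ*u + RR s τ*(BB s τ*(w-u)) + RR s τ*((RR s τ - BB s τ)*(w-v)) := by ring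
  rw [e1]
  linarith [m1, m2]
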